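/- (Theorem 3, asymptotic form) Let σ > 0 and let p be an even positive integer. Let H(ε) be the differential entropy of the density p(x) = C(ε) p_G(x) exp(−ε x^p), and let H₁(ε) = log(√(2π) σ (1 − ε σ^p (p−1)!!)) + (1 − ε σ^p (p−1)!!)^{−1} · (1/2 + ε σ^p ((p−1)!! − (1/2)(p+1)!!)). Then H(ε) − H₁(ε) = O(ε²) as ε → 0 from the right. -/

import Mathlib

open MeasureTheory Real Filter Topology Asymptotics

/-- The centered Gaussian density with standard deviation `σ`. -/
noncomputable def pG (σ x : ℝ) : ℝ :=
  (1 / (Real.sqrt (2 * Real.pi) * σ)) * Real.exp (-x ^ 2 / (2 * σ ^ 2))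

/-- The normalization integral of the perturbed density. -/
noncomputable def Zp (σ : ℝ) (p : ℕ) (ε : ℝ) : ℝ :=
  ∫ x : ℝ, pG σ x * Real.exp (-ε * x ^ p)

/-- The perturbed density `p(x) = C(ε) p_G(x) exp(-ε x^p)`. -/
noncomputable def ppert (σ : ℝ) (p : ℕ) (ε : ℝ) (x : ℝ) : ℝ :=
  (Zp σ p ε)⁻¹ * pG σ x * Real.exp (-ε * x ^ p)

/-- The differential entropy of the perturbed density. -/
noncomputable def Hpert (σ : ℝ) (p : ℕ) (ε : ℝ) : ℝ :=
  -∫ x : ℝ, ppert σ p ε x * Real.log (ppert σ p ε x)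

namespace Aux

/-- second-order upper bound for exp(-t) -/
lemma exp_neg_le_quad {t : ℝ} (ht : 0 ≤ t) : Real.exp (-t) ≤ 1 - t + t ^ 2 / 2 := by
  set h : ℝ → ℝ := fun t => 1 - t + t ^ 2 / 2 - Real.exp (-t) with hh
  have hd : ∀ x : ℝ, HasDerivAt h (-1 + x + Real.exp (-x)) x := by
    intro x
    have h1 : HasDerivAt (fun x : ℝ => 1 - x + x ^ 2 / 2) (-1 + x) x := by
      have := ((hasDerivAt_id x).const_sub 1).add
        (((hasDerivAt_pow 2 x).div_const 2))
      exact this.congr_deriv (by norm_num)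
    have h2 : HasDerivAt (fun x : ℝ => Real.exp (-x)) (-Real.exp (-x)) x := by
      have := ((hasDerivAt_id x).neg).exp
      simpa using this
    have := h1.sub h2
    exact this.congr_deriv (by ring)
  have hmono : Monotone h := by
    apply monotone_of_deriv_nonneg
    · exact fun x => (hd x).differentiableAt
    · intro x
      rw [(hd x).deriv]
      have := Real.add_one_le_exp (-x)
      linarith
  have h0 : h 0 = 0 := by simp [hh]
  have := hmono ht
  rw [h0] at this
  simp only [hh] at this
  linarith

lemma one_sub_le_exp_neg (t : ℝ) : 1 - t ≤ Real.exp (-t) := by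
  have := Real.add_one_le_exp (-t); linarith

variable {σ : ℝ} (hσ : 0 < σ)

lemma sqrt2pi_pos : 0 < Real.sqrt (2 * Real.pi) := Real.sqrt_pos.2 (by positivity)

include hσ

lemma pG_pos (x : ℝ) : 0 < pG σ x := by
  unfold pG
  have := sqrt2pi_pos
  positivity

lemma hb_pos : 0 < (2 * σ ^ 2)⁻¹ := by positivity

lemma pG_eq (x : ℝ) :
    pG σ x = (1 / (Real.sqrt (2 * Real.pi) * σ)) * Real.exp (-(2 * σ ^ 2)⁻¹ * x ^ 2) := by
  unfold pG
  congr 2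
  field_simp

lemma integrable_xk (k : ℕ) :
    Integrable (fun x : ℝ => x ^ k * Real.exp (-(2 * σ ^ 2)⁻¹ * x ^ 2)) := by
  have h := integrable_rpow_mul_exp_neg_mul_sq (hb_pos hσ)
    (s := (k : ℝ)) (by exact_mod_cast (by norm_num : (-1:ℝ) < 0).trans_le (Nat.cast_nonneg k))
  simpa [Real.rpow_natCast] using h

lemma integrable_pG_pow (k : ℕ) :
    Integrable (fun x : ℝ => pG σ x * x ^ k) := by
  have hfun : (fun x : ℝ => pG σ x * x ^ k) =
      fun x : ℝ => (1 / (Real.sqrt (2 * Real.pi) * σ)) *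
        (x ^ k * Real.exp (-(2 * σ ^ 2)⁻¹ * x ^ 2)) := by
    funext x; rw [pG_eq hσ]; ring
  rw [hfun]
  exact (integrable_xk hσ k).const_mul _

/-- Gaussian moments -/
noncomputable def gm (σ : ℝ) (k : ℕ) : ℝ := ∫ x : ℝ, pG σ x * x ^ k

lemma gm_eq (k : ℕ) : gm σ k = (1 / (Real.sqrt (2 * Real.pi) * σ)) *
    ∫ x : ℝ, x ^ k * Real.exp (-(2 * σ ^ 2)⁻¹ * x ^ 2) := by
  rw [gm, ← integral_const_mul]
  congr 1; funext x; rw [pG_eq hσ]; ring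

lemma gm_zero : gm σ 0 = 1 := by
  rw [gm_eq hσ]
  simp only [pow_zero, one_mul]
  rw [integral_gaussian]
  have h1 : Real.pi / (2 * σ ^ 2)⁻¹ = (2 * Real.pi) * σ ^ 2 := by
    field_simp
  rw [h1, Real.sqrt_mul (by positivity : (0:ℝ) ≤ 2 * Real.pi) (σ ^ 2), Real.sqrt_sq hσ.le]
  have := sqrt2pi_pos
  field_simp

lemma gm_rec (k : ℕ) : gm σ (k + 2) = ((k : ℝ) + 1) * σ ^ 2 * gm σ k := by
  set b : ℝ := (2 * σ ^ 2)⁻¹ with hbdef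
  have hb : 0 < b := hb_pos hσ
  set f : ℝ → ℝ := fun x => x ^ (k + 1) * Real.exp (-b * x ^ 2) with hf
  set f' : ℝ → ℝ := fun x =>
    ((k : ℝ) + 1) * (x ^ k * Real.exp (-b * x ^ 2)) -
      2 * b * (x ^ (k + 2) * Real.exp (-b * x ^ 2)) with hf'
  have hderiv : ∀ x : ℝ, HasDerivAt f (f' x) x := by
    intro x
    have h1 : HasDerivAt (fun x : ℝ => x ^ (k + 1)) (((k : ℝ) + 1) * x ^ k) x := by
      have := hasDerivAt_pow (k + 1) x
      simpa using this
    have h2 : HasDerivAt (fun x : ℝ => Real.exp (-b * x ^ 2))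
        (Real.exp (-b * x ^ 2) * (-b * (2 * x))) x := by
      have hinner : HasDerivAt (fun x : ℝ => -b * x ^ 2) (-b * (2 * x)) x := by
        have := (hasDerivAt_pow 2 x).const_mul (-b)
        simpa using this
      exact hinner.exp
    have := h1.mul h2
    exact this.congr_deriv (by simp only [hf']; ring)
  have hzero := integral_eq_zero_of_hasDerivAt_of_integrable hderiv
    (((integrable_xk hσ k).const_mul _).sub (((integrable_xk hσ (k + 2)).const_mul _)))
    (integrable_xk hσ (k + 1))
  have hsplit : ∫ x : ℝ, f' x =
      ((k : ℝ) + 1) * (∫ x : ℝ, x ^ k * Real.exp (-b * x ^ 2)) -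
        2 * b * ∫ x : ℝ, x ^ (k + 2) * Real.exp (-b * x ^ 2) := by
    rw [hf']
    rw [integral_sub ((integrable_xk hσ k).const_mul _) ((integrable_xk hσ (k + 2)).const_mul _),
      integral_const_mul, integral_const_mul]
  rw [hsplit] at hzero
  have h2b : 2 * b = (σ ^ 2)⁻¹ := by rw [hbdef]; field_simp
  rw [gm_eq hσ, gm_eq hσ]
  have hσ2 : (σ : ℝ) ^ 2 ≠ 0 := by positivity
  have : ∫ x : ℝ, x ^ (k + 2) * Real.exp (-b * x ^ 2) =
      ((k : ℝ) + 1) * σ ^ 2 * ∫ x : ℝ, x ^ k * Real.exp (-b * x ^ 2) := by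
    rw [h2b] at hzero
    field_simp at hzero ⊢
    linarith
  rw [this]; ring

omit hσ in
lemma dfac_odd (n : ℕ) :
    (Nat.doubleFactorial (2 * n + 1) : ℝ) = (2 * n + 1 : ℝ) * Nat.doubleFactorial (2 * n - 1) := by
  cases n with
  | zero => simp [Nat.doubleFactorial]
  | succ m =>
    have h : 2 * (m + 1) + 1 = (2 * m + 1) + 2 := by ring
    have h2 : 2 * (m + 1) - 1 = 2 * m + 1 := by omega
    rw [h, h2, Nat.doubleFactorial_add_two]
    push_cast; ring

lemma gm_even : ∀ n : ℕ, gm σ (2 * n) = σ ^ (2 * n) * Nat.doubleFactorial (2 * n - 1) := by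
  intro n
  induction n with
  | zero => simpa [Nat.doubleFactorial] using gm_zero hσ
  | succ m ih =>
    have h : 2 * (m + 1) = 2 * m + 2 := by ring
    rw [h, gm_rec hσ, ih]
    have h2 : 2 * m + 2 - 1 = 2 * m + 1 := by omega
    rw [h2, dfac_odd]
    push_cast
    ring

lemma gm_even' {k : ℕ} (hk : Even k) :
    gm σ k = σ ^ k * Nat.doubleFactorial (k - 1) := by
  obtain ⟨n, rfl⟩ := hk
  have : n + n = 2 * n := by ring
  rw [this, gm_even hσ]

lemma gm_nonneg {k : ℕ} (hk : Even k) : 0 ≤ gm σ k := by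
  rw [gm_even' hσ hk]; positivity

end Aux

namespace Aux

/-- the perturbed moment integrals -/
noncomputable def Gk (σ : ℝ) (p k : ℕ) (ε : ℝ) : ℝ :=
  ∫ x : ℝ, pG σ x * x ^ k * Real.exp (-ε * x ^ p)

variable {σ : ℝ} (hσ : 0 < σ) {p : ℕ} (hpe : Even p)

lemma exp_term_le_one {ε x : ℝ} (hε : 0 ≤ ε) (hpe : Even p) :
    Real.exp (-ε * x ^ p) ≤ 1 := by
  rw [Real.exp_le_one_iff]
  have : 0 ≤ x ^ p := hpe.pow_nonneg x
  nlinarith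

include hσ hpe

lemma integrable_Gk {k : ℕ} (hk : Even k) {ε : ℝ} (hε : 0 ≤ ε) :
    Integrable (fun x : ℝ => pG σ x * x ^ k * Real.exp (-ε * x ^ p)) := by
  apply Integrable.mono' (integrable_pG_pow hσ k)
  · apply Continuous.aestronglyMeasurable
    have hcpg : Continuous (pG σ) := by
      unfold pG; fun_prop
    fun_prop
  · refine Filter.Eventually.of_forall fun x => ?_
    have h1 : 0 ≤ pG σ x * x ^ k := mul_nonneg (pG_pos hσ x).le (hk.pow_nonneg x)
    rw [Real.norm_eq_abs, abs_mul, abs_of_nonneg h1, abs_of_nonneg (Real.exp_pos _).le]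
    calc pG σ x * x ^ k * Real.exp (-ε * x ^ p) ≤ pG σ x * x ^ k * 1 :=
          mul_le_mul_of_nonneg_left (exp_term_le_one hε hpe) h1
      _ = pG σ x * x ^ k := by ring

lemma Gk_lower {k : ℕ} (hk : Even k) {ε : ℝ} (hε : 0 ≤ ε) :
    gm σ k - ε * gm σ (k + p) ≤ Gk σ p k ε := by
  have hint : Integrable (fun x : ℝ => pG σ x * x ^ k - ε * (pG σ x * x ^ (k + p))) :=
    (integrable_pG_pow hσ k).sub ((integrable_pG_pow hσ (k + p)).const_mul ε)
  have hmono : ∀ x : ℝ, pG σ x * x ^ k - ε * (pG σ x * x ^ (k + p)) ≤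
      pG σ x * x ^ k * Real.exp (-ε * x ^ p) := by
    intro x
    have h1 : 0 ≤ pG σ x * x ^ k := mul_nonneg (pG_pos hσ x).le (hk.pow_nonneg x)
    have h2 := one_sub_le_exp_neg (ε * x ^ p)
    have h3 : pG σ x * x ^ k * (1 - ε * x ^ p) ≤ pG σ x * x ^ k * Real.exp (-(ε * x ^ p)) :=
      mul_le_mul_of_nonneg_left h2 h1
    calc pG σ x * x ^ k - ε * (pG σ x * x ^ (k + p))
        = pG σ x * x ^ k * (1 - ε * x ^ p) := by rw [pow_add]; ring
      _ ≤ pG σ x * x ^ k * Real.exp (-(ε * x ^ p)) := h3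
      _ = pG σ x * x ^ k * Real.exp (-ε * x ^ p) := by rw [neg_mul]
  have := integral_mono hint (integrable_Gk hσ hpe hk hε) hmono
  calc gm σ k - ε * gm σ (k + p)
      = ∫ x : ℝ, (pG σ x * x ^ k - ε * (pG σ x * x ^ (k + p))) := by
        rw [integral_sub (integrable_pG_pow hσ k) ((integrable_pG_pow hσ (k + p)).const_mul ε),
          integral_const_mul]
        rfl
    _ ≤ Gk σ p k ε := this

lemma Gk_upper {k : ℕ} (hk : Even k) {ε : ℝ} (hε : 0 ≤ ε) :
    Gk σ p k ε ≤ gm σ k - ε * gm σ (k + p) + ε ^ 2 / 2 * gm σ (k + 2 * p) := by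
  have hint : Integrable (fun x : ℝ => pG σ x * x ^ k - ε * (pG σ x * x ^ (k + p)) +
      ε ^ 2 / 2 * (pG σ x * x ^ (k + 2 * p))) :=
    ((integrable_pG_pow hσ k).sub ((integrable_pG_pow hσ (k + p)).const_mul ε)).add
      ((integrable_pG_pow hσ (k + 2 * p)).const_mul _)
  have hmono : ∀ x : ℝ, pG σ x * x ^ k * Real.exp (-ε * x ^ p) ≤
      pG σ x * x ^ k - ε * (pG σ x * x ^ (k + p)) + ε ^ 2 / 2 * (pG σ x * x ^ (k + 2 * p)) := by
    intro x
    have h1 : 0 ≤ pG σ x * x ^ k := mul_nonneg (pG_pos hσ x).le (hk.pow_nonneg x)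
    have ht : 0 ≤ ε * x ^ p := mul_nonneg hε (hpe.pow_nonneg x)
    have h2 := exp_neg_le_quad ht
    have h3 : pG σ x * x ^ k * Real.exp (-(ε * x ^ p)) ≤
        pG σ x * x ^ k * (1 - ε * x ^ p + (ε * x ^ p) ^ 2 / 2) :=
      mul_le_mul_of_nonneg_left h2 h1
    calc pG σ x * x ^ k * Real.exp (-ε * x ^ p)
        = pG σ x * x ^ k * Real.exp (-(ε * x ^ p)) := by rw [neg_mul]
      _ ≤ pG σ x * x ^ k * (1 - ε * x ^ p + (ε * x ^ p) ^ 2 / 2) := h3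
      _ = pG σ x * x ^ k - ε * (pG σ x * x ^ (k + p)) +
            ε ^ 2 / 2 * (pG σ x * x ^ (k + 2 * p)) := by
          rw [pow_add, pow_add, two_mul, pow_add]; ring
  have := integral_mono (integrable_Gk hσ hpe hk hε) hint hmono
  calc Gk σ p k ε ≤ ∫ x : ℝ, (pG σ x * x ^ k - ε * (pG σ x * x ^ (k + p)) +
        ε ^ 2 / 2 * (pG σ x * x ^ (k + 2 * p))) := this
    _ = gm σ k - ε * gm σ (k + p) + ε ^ 2 / 2 * gm σ (k + 2 * p) := by
        have i1 : Integrable (fun x : ℝ => pG σ x * x ^ k - ε * (pG σ x * x ^ (k + p))) :=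
          (integrable_pG_pow hσ k).sub ((integrable_pG_pow hσ (k + p)).const_mul ε)
        have i2 : Integrable (fun x : ℝ => ε ^ 2 / 2 * (pG σ x * x ^ (k + 2 * p))) :=
          (integrable_pG_pow hσ (k + 2 * p)).const_mul _
        rw [integral_add i1 i2,
          integral_sub (integrable_pG_pow hσ k) ((integrable_pG_pow hσ (k + p)).const_mul ε),
          integral_const_mul, integral_const_mul]
        rfl

lemma Gk_bound {k : ℕ} (hk : Even k) {ε : ℝ} (hε : 0 ≤ ε) :
    |Gk σ p k ε - (gm σ k - ε * gm σ (k + p))| ≤ ε ^ 2 / 2 * gm σ (k + 2 * p) := by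
  rw [abs_le]
  constructor
  · have := Gk_lower hσ hpe hk hε
    have hnn : 0 ≤ ε ^ 2 / 2 * gm σ (k + 2 * p) :=
      mul_nonneg (by positivity) (gm_nonneg hσ (hk.add (hpe.mul_left 2)))
    linarith
  · have := Gk_upper hσ hpe hk hε
    linarith

omit hσ hpe in
lemma Zp_eq_Gk0 (ε : ℝ) : Zp σ p ε = Gk σ p 0 ε := by
  unfold Zp Gk
  congr 1; funext x; rw [pow_zero, mul_one]

end Aux

namespace Aux

variable {σ : ℝ} (hσ : 0 < σ) {p : ℕ} (hpe : Even p)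

include hσ hpe

lemma Hpert_formula {ε : ℝ} (hε : 0 ≤ ε) (hZ : 0 < Zp σ p ε) :
    Hpert σ p ε = Real.log (Zp σ p ε) + Real.log (Real.sqrt (2 * Real.pi) * σ) +
      (Zp σ p ε)⁻¹ * (Gk σ p 2 ε / (2 * σ ^ 2) + ε * Gk σ p p ε) := by
  have hc : (0 : ℝ) < Real.sqrt (2 * Real.pi) * σ := mul_pos sqrt2pi_pos hσ
  set Z : ℝ := Zp σ p ε with hZdef
  set c1 : ℝ := Z⁻¹ * (-Real.log Z - Real.log (Real.sqrt (2 * Real.pi) * σ)) with hc1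
  set c2 : ℝ := -(Z⁻¹ * (2 * σ ^ 2)⁻¹) with hc2
  set c3 : ℝ := -(Z⁻¹ * ε) with hc3
  have hfun : (fun x : ℝ => ppert σ p ε x * Real.log (ppert σ p ε x)) =
      fun x : ℝ => c1 * (pG σ x * x ^ 0 * Real.exp (-ε * x ^ p)) +
        c2 * (pG σ x * x ^ 2 * Real.exp (-ε * x ^ p)) +
        c3 * (pG σ x * x ^ p * Real.exp (-ε * x ^ p)) := by
    funext x
    have hpg : 0 < pG σ x := pG_pos hσ x
    have hexp : (0 : ℝ) < Real.exp (-ε * x ^ p) := Real.exp_pos _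
    have hlog : Real.log (ppert σ p ε x) =
        -Real.log Z - Real.log (Real.sqrt (2 * Real.pi) * σ) -
          (2 * σ ^ 2)⁻¹ * x ^ 2 - ε * x ^ p := by
      unfold ppert
      rw [Real.log_mul (by positivity) (ne_of_gt hexp),
        Real.log_mul (by positivity) (ne_of_gt hpg), Real.log_inv, Real.log_exp]
      rw [pG_eq hσ, Real.log_mul (by positivity) (ne_of_gt (Real.exp_pos _)), Real.log_exp,
        one_div, Real.log_inv]
      ring
    rw [hlog]
    unfold ppert
    rw [hc1, hc2, hc3]
    rw [pow_zero]
    ring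
  unfold Hpert
  rw [hfun]
  have i0 := (integrable_Gk hσ hpe (Even.zero) hε).const_mul c1
  have i2 := (integrable_Gk hσ hpe (even_two) hε).const_mul c2
  have ip := (integrable_Gk hσ hpe hpe hε).const_mul c3
  have i02 : Integrable (fun x : ℝ => c1 * (pG σ x * x ^ 0 * Real.exp (-ε * x ^ p)) +
      c2 * (pG σ x * x ^ 2 * Real.exp (-ε * x ^ p))) := i0.add i2
  rw [integral_add i02 ip, integral_add i0 i2, integral_const_mul, integral_const_mul,
    integral_const_mul]
  have hZG : (∫ x : ℝ, pG σ x * x ^ 0 * Real.exp (-ε * x ^ p)) = Z := by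
    rw [hZdef, Zp_eq_Gk0]; rfl
  rw [hZG]
  show -(c1 * Z + c2 * Gk σ p 2 ε + c3 * Gk σ p p ε) = _
  have hZne : Z ≠ 0 := ne_of_gt hZ
  rw [hc1, hc2, hc3]
  field_simp
  ring

end Aux

namespace Aux

lemma log_diff_abs_le {a b : ℝ} (ha : 1 / 2 ≤ a) (hb : 1 / 2 ≤ b) :
    |Real.log a - Real.log b| ≤ 2 * |a - b| := by
  have key : ∀ x y : ℝ, 1 / 2 ≤ x → 1 / 2 ≤ y → Real.log x - Real.log y ≤ 2 * |x - y| := by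
    intro x y hx hy
    have hx0 : 0 < x := lt_of_lt_of_le (by norm_num) hx
    have hy0 : 0 < y := lt_of_lt_of_le (by norm_num) hy
    have h1 : Real.log x - Real.log y = Real.log (x / y) := by
      rw [Real.log_div (ne_of_gt hx0) (ne_of_gt hy0)]
    rw [h1]
    have h2 : Real.log (x / y) ≤ x / y - 1 := Real.log_le_sub_one_of_pos (div_pos hx0 hy0)
    have h3 : x / y - 1 = (x - y) / y := by field_simp
    have h4 : (x - y) / y ≤ 2 * |x - y| := by
      rw [div_le_iff₀ hy0]
      nlinarith [le_abs_self (x - y), abs_nonneg (x - y)]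
    linarith
  rw [abs_sub_le_iff]
  constructor
  · exact key a b ha hb
  · have := key b a hb ha
    rwa [abs_sub_comm] at this
end Aux

open Aux


theorem stmt9 (σ : ℝ) (hσ : 0 < σ) (p : ℕ) (hp : 0 < p) (hpe : Even p)
    (H₁ : ℝ → ℝ) (hH₁ : ∀ ε : ℝ, H₁ ε =
      Real.log (Real.sqrt (2 * Real.pi) * σ *
          (1 - ε * σ ^ p * (Nat.doubleFactorial (p - 1) : ℝ))) +
        (1 - ε * σ ^ p * (Nat.doubleFactorial (p - 1) : ℝ))⁻¹ *
          (1 / 2 + ε * σ ^ p * ((Nat.doubleFactorial (p - 1) : ℝ) -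
            (1 / 2) * (Nat.doubleFactorial (p + 1) : ℝ)))) :
    (fun ε : ℝ => Hpert σ p ε - H₁ ε) =O[𝓝[>] (0 : ℝ)] fun ε => ε ^ 2 := by
  classical
  have hσ2 : (0 : ℝ) < σ ^ 2 := by positivity
  have hcpos : (0 : ℝ) < Real.sqrt (2 * Real.pi) * σ := mul_pos sqrt2pi_pos hσ
  -- constants (as opaque variables)
  obtain ⟨m, hmdef⟩ : ∃ x : ℝ, x = gm σ p := ⟨_, rfl⟩
  have hm : m = σ ^ p * (Nat.doubleFactorial (p - 1) : ℝ) := by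
    rw [hmdef]; exact gm_even' hσ hpe
  have hmnn : 0 ≤ m := hmdef ▸ gm_nonneg hσ hpe
  obtain ⟨a2, ha2def⟩ : ∃ x : ℝ, x = gm σ (2 + p) := ⟨_, rfl⟩
  have ha2 : a2 = σ ^ 2 * (σ ^ p * (Nat.doubleFactorial (p + 1) : ℝ)) := by
    rw [ha2def, gm_even' hσ (even_two.add hpe)]
    have h1 : 2 + p - 1 = p + 1 := by omega
    rw [h1, pow_add]
    ring
  have ha2nn : 0 ≤ a2 := ha2def ▸ gm_nonneg hσ (even_two.add hpe)
  obtain ⟨K0, hK0def⟩ : ∃ x : ℝ, x = gm σ (2 * p) := ⟨_, rfl⟩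
  have hK0 : 0 ≤ K0 := hK0def ▸ gm_nonneg hσ (even_two_mul p)
  obtain ⟨K2, hK2def⟩ : ∃ x : ℝ, x = gm σ (2 + 2 * p) := ⟨_, rfl⟩
  have hK2 : 0 ≤ K2 := hK2def ▸ gm_nonneg hσ (even_two.add (even_two_mul p))
  obtain ⟨Kp, hKpdef⟩ : ∃ x : ℝ, x = gm σ (p + 2 * p) := ⟨_, rfl⟩
  have hKp : 0 ≤ Kp := hKpdef ▸ gm_nonneg hσ (hpe.add (even_two_mul p))
  obtain ⟨G2p, hG2pdef⟩ : ∃ x : ℝ, x = gm σ (p + p) := ⟨_, rfl⟩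
  have hG2p : 0 ≤ G2p := hG2pdef ▸ gm_nonneg hσ (hpe.add hpe)
  have hgm0 : gm σ 0 = 1 := gm_zero hσ
  have hgm2 : gm σ 2 = σ ^ 2 := by
    rw [gm_even' hσ even_two]
    simp [Nat.doubleFactorial]
  obtain ⟨CG, hCGdef⟩ : ∃ x : ℝ, x = K2 / (4 * σ ^ 2) + (G2p + Kp) := ⟨_, rfl⟩
  have hCGnn : 0 ≤ CG := by rw [hCGdef]; positivity
  obtain ⟨CG1, hCG1def⟩ : ∃ x : ℝ, x = 1 / 2 + m + a2 / (2 * σ ^ 2) := ⟨_, rfl⟩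
  have hCG1nn : 0 ≤ CG1 := by rw [hCG1def]; positivity
  obtain ⟨Cfin, hCfin⟩ : ∃ x : ℝ, x = K0 + 2 * K0 * (CG1 + CG) + 2 * CG := ⟨_, rfl⟩
  obtain ⟨δ, hδdef⟩ : ∃ x : ℝ, x = min 1 (1 / (2 * (m + K0 + 1))) := ⟨_, rfl⟩
  have hδpos : 0 < δ := hδdef ▸ lt_min one_pos (by positivity)
  rw [isBigO_iff]
  refine ⟨Cfin, ?_⟩
  filter_upwards [Ioc_mem_nhdsGT_of_mem (show (0 : ℝ) ∈ Set.Ico (0 : ℝ) δ from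
    ⟨le_refl 0, hδpos⟩)] with ε hmem
  obtain ⟨hε0, hεδ⟩ := hmem
  have hε1 : ε ≤ 1 := hεδ.trans (hδdef ▸ min_le_left _ _)
  have hε2 : ε ≤ 1 / (2 * (m + K0 + 1)) := hεδ.trans (hδdef ▸ min_le_right _ _)
  have hεS : ε * (m + K0 + 1) ≤ 1 / 2 := by
    rw [le_div_iff₀ (by positivity)] at hε2
    linarith
  have hsq : ε ^ 2 ≤ ε := by
    rw [sq]; exact mul_le_of_le_one_right hε0.le hε1
  have hexp : ε * m + ε * K0 + ε ≤ 1 / 2 := by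
    have h : ε * (m + K0 + 1) = ε * m + ε * K0 + ε := by ring
    linarith [hεS]
  -- the moment bounds
  have e0 := Gk_bound hσ hpe Even.zero hε0.le
  rw [zero_add, zero_add, hgm0, ← hmdef, ← hK0def] at e0
  have eA := Gk_bound hσ hpe even_two hε0.le
  rw [hgm2, ← ha2def, ← hK2def] at eA
  have eB := Gk_bound hσ hpe hpe hε0.le
  rw [← hmdef, ← hG2pdef, ← hKpdef] at eB
  -- names
  obtain ⟨F, hFdef⟩ : ∃ x : ℝ, x = Zp σ p ε := ⟨_, rfl⟩
  obtain ⟨A, hAdef⟩ : ∃ x : ℝ, x = Gk σ p 2 ε := ⟨_, rfl⟩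
  obtain ⟨B, hBdef⟩ : ∃ x : ℝ, x = Gk σ p p ε := ⟨_, rfl⟩
  rw [← hAdef] at eA
  rw [← hBdef] at eB
  have hFB : Zp σ p ε = Gk σ p 0 ε := Zp_eq_Gk0 (σ := σ) (p := p) ε
  have e0' : |F - (1 - ε * m)| ≤ ε ^ 2 / 2 * K0 := by rw [hFdef, hFB]; exact e0
  obtain ⟨e0l, e0r⟩ := abs_le.1 e0'
  have hεm : ε * m ≤ 1 / 2 := by linarith [mul_nonneg hε0.le hK0]
  have hb_lb : 1 / 2 ≤ 1 - ε * m := by linarith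
  have hm2 : ε ^ 2 * K0 ≤ ε * K0 := mul_le_mul_of_nonneg_right hsq hK0
  have hF_lb : 1 / 2 ≤ F := by linarith [mul_nonneg hε0.le hK0]
  have hFpos : 0 < F := lt_of_lt_of_le (by norm_num) hF_lb
  have hbpos : 0 < 1 - ε * m := lt_of_lt_of_le (by norm_num) hb_lb
  -- entropy formula
  have hHp : Hpert σ p ε = Real.log F + Real.log (Real.sqrt (2 * Real.pi) * σ) +
      F⁻¹ * (A / (2 * σ ^ 2) + ε * B) := by
    rw [hFdef, hAdef, hBdef]
    exact Hpert_formula hσ hpe hε0.le (hFdef ▸ hFpos)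
  -- H₁ rewrite
  obtain ⟨G₁, hG1def⟩ : ∃ x : ℝ, x = 1 / 2 + ε * (m - a2 / (2 * σ ^ 2)) := ⟨_, rfl⟩
  have hH1 : H₁ ε = Real.log (Real.sqrt (2 * Real.pi) * σ) + Real.log (1 - ε * m) +
      (1 - ε * m)⁻¹ * G₁ := by
    rw [hH₁ ε]
    have hb' : 1 - ε * σ ^ p * (Nat.doubleFactorial (p - 1) : ℝ) = 1 - ε * m := by
      rw [hm]; ring
    have hG1' : 1 / 2 + ε * σ ^ p * ((Nat.doubleFactorial (p - 1) : ℝ) -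
        (1 / 2) * (Nat.doubleFactorial (p + 1) : ℝ)) = G₁ := by
      rw [hG1def, hm, ha2]
      field_simp
    rw [hb', hG1', Real.log_mul (ne_of_gt hcpos) (ne_of_gt hbpos)]
  obtain ⟨G, hGdef⟩ : ∃ x : ℝ, x = A / (2 * σ ^ 2) + ε * B := ⟨_, rfl⟩
  -- difference
  have hD : Hpert σ p ε - H₁ ε = (Real.log F - Real.log (1 - ε * m)) +
      (F⁻¹ * G - (1 - ε * m)⁻¹ * G₁) := by
    rw [hHp, hH1, hGdef]; ring
  -- bound on log part
  have hL : |Real.log F - Real.log (1 - ε * m)| ≤ ε ^ 2 * K0 := by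
    have h0 := log_diff_abs_le hF_lb hb_lb
    linarith [h0, e0']
  -- bound on |B - m|
  have hBm : |B - m| ≤ ε * (G2p + Kp) := by
    obtain ⟨eBl, eBr⟩ := abs_le.1 eB
    rw [abs_le]
    have h1 := mul_le_mul_of_nonneg_right hsq hKp
    have h2 := mul_nonneg hε0.le hG2p
    exact ⟨by linarith [h1, h2], by linarith [h1, h2]⟩
  -- bound on |G - G₁|
  have hGdecomp : G - G₁ = (A - (σ ^ 2 - ε * a2)) / (2 * σ ^ 2) + ε * (B - m) := by
    rw [hGdef, hG1def]; field_simp; ring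
  have hGG : |G - G₁| ≤ ε ^ 2 * CG := by
    calc |G - G₁| ≤ |(A - (σ ^ 2 - ε * a2)) / (2 * σ ^ 2)| + |ε * (B - m)| := by
          rw [hGdecomp]; exact abs_add_le _ _
      _ = |A - (σ ^ 2 - ε * a2)| / (2 * σ ^ 2) + ε * |B - m| := by
          have hq1 : |(A - (σ ^ 2 - ε * a2)) / (2 * σ ^ 2)| =
              |A - (σ ^ 2 - ε * a2)| / (2 * σ ^ 2) := by
            rw [abs_div, abs_of_pos (by positivity : (0:ℝ) < 2 * σ ^ 2)]
          have hq2 : |ε * (B - m)| = ε * |B - m| := by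
            rw [abs_mul, abs_of_pos hε0]
          rw [hq1, hq2]
      _ ≤ (ε ^ 2 / 2 * K2) / (2 * σ ^ 2) + ε * (ε * (G2p + Kp)) :=
          add_le_add ((div_le_div_iff_of_pos_right (by positivity)).2 eA)
            (mul_le_mul_of_nonneg_left hBm hε0.le)
      _ = ε ^ 2 * CG := by rw [hCGdef]; field_simp; ring
  -- bound on |G₁| and |G|
  have hG1abs : |G₁| ≤ CG1 := by
    rw [hG1def, hCG1def, abs_le]
    have hx : 0 ≤ a2 / (2 * σ ^ 2) := by positivity
    constructor
    · linarith [mul_nonneg hε0.le hmnn, mul_nonneg hε0.le hx,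
        mul_nonneg (sub_nonneg.2 hε1) hmnn, mul_nonneg (sub_nonneg.2 hε1) hx]
    · linarith [mul_nonneg hε0.le hmnn, mul_nonneg hε0.le hx,
        mul_nonneg (sub_nonneg.2 hε1) hmnn, mul_nonneg (sub_nonneg.2 hε1) hx]
  have hGabs : |G| ≤ CG1 + CG := by
    have h1 : |G| ≤ |G₁| + |G - G₁| := by
      calc |G| = |G₁ + (G - G₁)| := by ring_nf
        _ ≤ |G₁| + |G - G₁| := abs_add_le _ _
    have h2 : ε ^ 2 * CG ≤ CG := by
      have := mul_le_mul_of_nonneg_right (hsq.trans hε1) hCGnn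
      linarith [this]
    linarith
  -- inverse difference bound
  have hFbne : F ≠ 0 := ne_of_gt hFpos
  have hbne : (1 - ε * m) ≠ 0 := ne_of_gt hbpos
  have hFbprod : 1 / 4 ≤ F * (1 - ε * m) := by
    have h1 := mul_le_mul_of_nonneg_right hF_lb hbpos.le
    linarith [h1, hb_lb]
  have hinv : |F⁻¹ - (1 - ε * m)⁻¹| ≤ 2 * (ε ^ 2 * K0) := by
    rw [inv_sub_inv hFbne hbne, abs_div, abs_of_pos (mul_pos hFpos hbpos)]
    have h1 : |(1 - ε * m) - F| ≤ ε ^ 2 / 2 * K0 := by rw [abs_sub_comm]; exact e0'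
    calc |(1 - ε * m) - F| / (F * (1 - ε * m)) ≤ (ε ^ 2 / 2 * K0) / (1 / 4) :=
          div_le_div₀ (by positivity) h1 (by norm_num) hFbprod
      _ = 2 * (ε ^ 2 * K0) := by ring
  have hbinv : (1 - ε * m)⁻¹ ≤ 2 := by
    have := one_div_le_one_div_of_le (by norm_num : (0:ℝ) < 1 / 2) hb_lb
    rw [one_div] at this
    linarith [this]
  have hbinvpos : 0 < (1 - ε * m)⁻¹ := inv_pos.2 hbpos
  -- bound on second part
  have hR : |F⁻¹ * G - (1 - ε * m)⁻¹ * G₁| ≤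
      2 * (ε ^ 2 * K0) * (CG1 + CG) + 2 * (ε ^ 2 * CG) := by
    have hdec : F⁻¹ * G - (1 - ε * m)⁻¹ * G₁ =
        (F⁻¹ - (1 - ε * m)⁻¹) * G + (1 - ε * m)⁻¹ * (G - G₁) := by ring
    calc |F⁻¹ * G - (1 - ε * m)⁻¹ * G₁| ≤
          |(F⁻¹ - (1 - ε * m)⁻¹) * G| + |(1 - ε * m)⁻¹ * (G - G₁)| := by
          rw [hdec]; exact abs_add_le _ _
      _ = |F⁻¹ - (1 - ε * m)⁻¹| * |G| + (1 - ε * m)⁻¹ * |G - G₁| := by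
          rw [abs_mul, abs_mul, abs_of_pos hbinvpos]
      _ ≤ 2 * (ε ^ 2 * K0) * (CG1 + CG) + 2 * (ε ^ 2 * CG) :=
          add_le_add (mul_le_mul hinv hGabs (abs_nonneg _) (by positivity))
            (mul_le_mul hbinv hGG (abs_nonneg _) (by norm_num))
  -- conclude
  have htotal : |Hpert σ p ε - H₁ ε| ≤ Cfin * ε ^ 2 := by
    rw [hD]
    calc |Real.log F - Real.log (1 - ε * m) + (F⁻¹ * G - (1 - ε * m)⁻¹ * G₁)| ≤
          |Real.log F - Real.log (1 - ε * m)| + |F⁻¹ * G - (1 - ε * m)⁻¹ * G₁| := abs_add_le _ _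
      _ ≤ ε ^ 2 * K0 + (2 * (ε ^ 2 * K0) * (CG1 + CG) + 2 * (ε ^ 2 * CG)) :=
          add_le_add hL hR
      _ = Cfin * ε ^ 2 := by rw [hCfin]; ring
  rw [Real.norm_eq_abs, Real.norm_eq_abs, abs_of_nonneg (sq_nonneg ε)]
  exact htotal
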